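/- arXiv:1406.0005 — 5 statements merged into one kernel-verified Lean document; each statement's English description precedes it below -/
import Mathlib

section
/- Let X be uniform on B(S₀,R₀) ⊂ ℝ³, P at distance R₁ from S₀ with R₁ ≥ R₀ > 0, and D = ‖P - X‖₂. For R₁ - R₀ ≤ d ≤ R₁ + R₀, P(D ≤ d) = [h₁(d)²(3d - h₁(d)) + h₂(d)²(3R₀ - h₂(d))]/(4R₀³), where h₁(d) = d - R₁ + (R₀² + R₁² - d²)/(2R₁) and h₂(d) = R₀ - (R₀² + R₁² - d²)/(2R₁). -/
open Real MeasureTheory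

set_option maxHeartbeats 1000000

private lemma exists_rot (c : EuclideanSpace ℝ (Fin 3)) (hc : c ≠ 0) :
    ∃ f : EuclideanSpace ℝ (Fin 3) ≃ₗᵢ[ℝ] EuclideanSpace ℝ (Fin 3),
      f c = ‖c‖ • EuclideanSpace.single (0 : Fin 3) (1 : ℝ) := by
  set u : EuclideanSpace ℝ (Fin 3) := ‖c‖⁻¹ • c with hu
  have hnc : ‖c‖ ≠ 0 := norm_ne_zero_iff.mpr hc
  have hun : ‖u‖ = 1 := by
    rw [hu, norm_smul, norm_inv, norm_norm, inv_mul_cancel₀ hnc]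
  have horth : Orthonormal ℝ (({0} : Set (Fin 3)).restrict (fun _ : Fin 3 => u)) := by
    constructor
    · intro i; exact hun
    · intro i j hij; exact absurd (Subsingleton.elim i j) hij
  obtain ⟨b, hb⟩ := horth.exists_orthonormalBasis_extension_of_card_eq (by simp)
  have hb0 : b 0 = u := hb 0 rfl
  have hcu : c = ‖c‖ • u := by rw [hu, smul_smul, mul_inv_cancel₀ hnc, one_smul]
  refine ⟨b.repr, ?_⟩
  conv_lhs => rw [hcu]
  rw [_root_.map_smul, ← hb0, b.repr_self]

private lemma volume_disk (m : ℝ) :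
    volume {z : Fin 2 → ℝ | z 0 ^ 2 + z 1 ^ 2 ≤ m} = ENNReal.ofReal (π * m) := by
  rcases lt_or_ge m 0 with hm | hm
  · have : {z : Fin 2 → ℝ | z 0 ^ 2 + z 1 ^ 2 ≤ m} = ∅ := by
      ext z; simp only [Set.mem_setOf_eq, Set.mem_empty_iff_false, iff_false, not_le]
      nlinarith [sq_nonneg (z 0), sq_nonneg (z 1)]
    rw [this, measure_empty, Eq.comm, ENNReal.ofReal_eq_zero]
    nlinarith [Real.pi_pos]
  · have key : {z : Fin 2 → ℝ | z 0 ^ 2 + z 1 ^ 2 ≤ m} =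
        (WithLp.toLp 2 : (Fin 2 → ℝ) → EuclideanSpace ℝ (Fin 2)) ⁻¹'
          (Metric.closedBall (0 : EuclideanSpace ℝ (Fin 2)) (Real.sqrt m)) := by
      ext z
      simp only [Set.mem_preimage, Metric.mem_closedBall, Set.mem_setOf_eq, dist_zero_right]
      rw [EuclideanSpace.norm_eq, Real.sqrt_le_sqrt_iff hm,
        Fin.sum_univ_two]
      simp [sq_abs]
    rw [key, (PiLp.volume_preserving_toLp (Fin 2)).measure_preimage
        measurableSet_closedBall.nullMeasurableSet,
      EuclideanSpace.volume_closedBall]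
    simp only [Fintype.card_fin]
    rw [show ((2:ℕ):ℝ)/2 + 1 = 2 by norm_num, Real.Gamma_two]
    rw [← ENNReal.ofReal_pow (Real.sqrt_nonneg m), Real.sq_sqrt hm, ← ENNReal.ofReal_mul hm]
    rw [Real.sq_sqrt Real.pi_pos.le]
    ring_nf

private lemma integral_cap (a b c r : ℝ) :
    ∫ t in a..b, (r ^ 2 - (t - c) ^ 2) =
      (r ^ 2 * (b - c) - (b - c) ^ 3 / 3) - (r ^ 2 * (a - c) - (a - c) ^ 3 / 3) := by
  have h : ∀ t : ℝ, HasDerivAt (fun t => r ^ 2 * (t - c) - (t - c) ^ 3 / 3)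
      (r ^ 2 - (t - c) ^ 2) t := by
    intro t
    have h1 : HasDerivAt (fun t : ℝ => t - c) 1 t := (hasDerivAt_id t).sub_const c
    have h2 := (h1.pow 3).div_const 3
    have h3 := h1.const_mul (r ^ 2)
    exact (h3.sub h2).congr_deriv (by norm_num)
  rw [intervalIntegral.integral_eq_sub_of_hasDerivAt (fun t _ => h t)]
  exact (Continuous.intervalIntegrable (by continuity) a b)

private lemma lintegral_caps (R₀ R₁ d h₁ h₂ : ℝ) (hR₀ : 0 < R₀) (hR₁ : R₀ ≤ R₁)
    (hd0 : R₁ - R₀ ≤ d) (hd : d ≤ R₁ + R₀)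
    (hh₁ : h₁ = d - R₁ + (R₀ ^ 2 + R₁ ^ 2 - d ^ 2) / (2 * R₁))
    (hh₂ : h₂ = R₀ - (R₀ ^ 2 + R₁ ^ 2 - d ^ 2) / (2 * R₁)) :
    (∫⁻ t : ℝ, ENNReal.ofReal (π * min (R₀ ^ 2 - t ^ 2) (d ^ 2 - (t - R₁) ^ 2))) =
      ENNReal.ofReal (π / 3 * (h₁ ^ 2 * (3 * d - h₁) + h₂ ^ 2 * (3 * R₀ - h₂))) := by
  have hR₁0 : (0:ℝ) < R₁ := lt_of_lt_of_le hR₀ hR₁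
  have hdpos : (0:ℝ) ≤ d := by linarith
  set c : ℝ := (R₀ ^ 2 + R₁ ^ 2 - d ^ 2) / (2 * R₁) with hcdef
  have hc2R₁ : 2 * R₁ * c = R₀ ^ 2 + R₁ ^ 2 - d ^ 2 := by
    rw [hcdef]; field_simp
  have hc1 : R₁ - d ≤ c := by
    rw [hcdef, le_div_iff₀ (by linarith : (0:ℝ) < 2 * R₁)]
    nlinarith
  have hc2 : c ≤ R₀ := by
    rw [hcdef, div_le_iff₀ (by linarith : (0:ℝ) < 2 * R₁)]
    nlinarith
  have hcR₁ : c ≤ R₁ := le_trans hc2 hR₁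
  have hcnR₀ : -R₀ ≤ c := by linarith
  have hsupp : (fun t : ℝ => ENNReal.ofReal (π * min (R₀ ^ 2 - t ^ 2) (d ^ 2 - (t - R₁) ^ 2))) =
      (Set.Icc (R₁ - d) R₀).indicator
        (fun t => ENNReal.ofReal (π * min (R₀ ^ 2 - t ^ 2) (d ^ 2 - (t - R₁) ^ 2))) := by
    funext t
    by_cases ht : t ∈ Set.Icc (R₁ - d) R₀
    · rw [Set.indicator_of_mem ht]
    · rw [Set.indicator_of_notMem ht, ENNReal.ofReal_eq_zero]
      rw [Set.mem_Icc, not_and_or, not_le, not_le] at ht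
      rcases ht with ht | ht
      · have : d ^ 2 - (t - R₁) ^ 2 < 0 := by nlinarith
        nlinarith [min_le_right (R₀ ^ 2 - t ^ 2) (d ^ 2 - (t - R₁) ^ 2), Real.pi_pos]
      · have : R₀ ^ 2 - t ^ 2 < 0 := by nlinarith
        nlinarith [min_le_left (R₀ ^ 2 - t ^ 2) (d ^ 2 - (t - R₁) ^ 2), Real.pi_pos]
  rw [hsupp, lintegral_indicator measurableSet_Icc,
    ← Set.Icc_union_Ioc_eq_Icc hc1 hc2,
    lintegral_union measurableSet_Ioc
      (Set.disjoint_left.mpr fun t ht ht' => absurd ht'.1 (not_lt.mpr ht.2))]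
  have piece1 : (∫⁻ t in Set.Icc (R₁ - d) c,
      ENNReal.ofReal (π * min (R₀ ^ 2 - t ^ 2) (d ^ 2 - (t - R₁) ^ 2))) =
      ENNReal.ofReal (π * (h₁ ^ 2 * (3 * d - h₁) / 3)) := by
    have congr1 : ∀ t ∈ Set.Icc (R₁ - d) c,
        ENNReal.ofReal (π * min (R₀ ^ 2 - t ^ 2) (d ^ 2 - (t - R₁) ^ 2)) =
        ENNReal.ofReal (π * (d ^ 2 - (t - R₁) ^ 2)) := by
      intro t ht
      rw [Set.mem_Icc] at ht
      rw [min_eq_right]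
      nlinarith [hc2R₁, mul_le_mul_of_nonneg_left ht.2 (by linarith : (0:ℝ) ≤ 2 * R₁)]
    rw [setLIntegral_congr_fun_ae measurableSet_Icc (ae_of_all _ congr1)]
    have hcont : Continuous fun t : ℝ => π * (d ^ 2 - (t - R₁) ^ 2) :=
      continuous_const.mul (continuous_const.sub ((continuous_id.sub continuous_const).pow 2))
    have hnn : 0 ≤ᵐ[volume.restrict (Set.Icc (R₁ - d) c)]
        fun t : ℝ => π * (d ^ 2 - (t - R₁) ^ 2) := by
      refine (ae_restrict_iff' measurableSet_Icc).mpr (ae_of_all _ fun t ht => ?_)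
      rw [Set.mem_Icc] at ht
      have hf : (0:ℝ) ≤ d ^ 2 - (t - R₁) ^ 2 := by
        nlinarith [mul_nonneg (by linarith : (0:ℝ) ≤ d - R₁ + t)
          (by linarith : (0:ℝ) ≤ d + R₁ - t)]
      exact mul_nonneg Real.pi_pos.le hf
    rw [← ofReal_integral_eq_lintegral_ofReal (hcont.integrableOn_Icc) hnn]
    rw [MeasureTheory.integral_Icc_eq_integral_Ioc,
      ← intervalIntegral.integral_of_le (by linarith : R₁ - d ≤ c),
      intervalIntegral.integral_const_mul, integral_cap]
    rw [hh₁]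
    congr 1
    ring
  have piece2 : (∫⁻ t in Set.Ioc c R₀,
      ENNReal.ofReal (π * min (R₀ ^ 2 - t ^ 2) (d ^ 2 - (t - R₁) ^ 2))) =
      ENNReal.ofReal (π * (h₂ ^ 2 * (3 * R₀ - h₂) / 3)) := by
    have congr2 : ∀ t ∈ Set.Ioc c R₀,
        ENNReal.ofReal (π * min (R₀ ^ 2 - t ^ 2) (d ^ 2 - (t - R₁) ^ 2)) =
        ENNReal.ofReal (π * (R₀ ^ 2 - t ^ 2)) := by
      intro t ht
      rw [Set.mem_Ioc] at ht
      rw [min_eq_left]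
      nlinarith [hc2R₁, mul_le_mul_of_nonneg_left ht.1.le (by linarith : (0:ℝ) ≤ 2 * R₁)]
    rw [setLIntegral_congr_fun_ae measurableSet_Ioc (ae_of_all _ congr2)]
    have hcont : Continuous fun t : ℝ => π * (R₀ ^ 2 - t ^ 2) :=
      continuous_const.mul (continuous_const.sub (continuous_pow 2))
    have hnn : 0 ≤ᵐ[volume.restrict (Set.Ioc c R₀)]
        fun t : ℝ => π * (R₀ ^ 2 - t ^ 2) := by
      refine (ae_restrict_iff' measurableSet_Ioc).mpr (ae_of_all _ fun t ht => ?_)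
      rw [Set.mem_Ioc] at ht
      have hf : (0:ℝ) ≤ R₀ ^ 2 - t ^ 2 := by
        nlinarith [mul_nonneg (by linarith : (0:ℝ) ≤ R₀ - t) (by linarith : (0:ℝ) ≤ R₀ + t)]
      exact mul_nonneg Real.pi_pos.le hf
    rw [← ofReal_integral_eq_lintegral_ofReal (hcont.integrableOn_Ioc) hnn]
    rw [← intervalIntegral.integral_of_le (by linarith : c ≤ R₀),
      intervalIntegral.integral_const_mul]
    have hic := integral_cap c R₀ 0 R₀
    simp only [sub_zero] at hic
    rw [hic, hh₂]
    congr 1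
    ring
  have hh₁nn : (0:ℝ) ≤ h₁ := by rw [hh₁]; linarith
  have hh₁le : h₁ ≤ d := by rw [hh₁]; linarith
  have hh₂nn : (0:ℝ) ≤ h₂ := by rw [hh₂]; linarith
  have hh₂le : h₂ ≤ 2 * R₀ := by rw [hh₂]; linarith
  rw [piece1, piece2, ← ENNReal.ofReal_add
    (mul_nonneg Real.pi_pos.le (div_nonneg (mul_nonneg (sq_nonneg h₁) (by linarith)) (by norm_num)))
    (mul_nonneg Real.pi_pos.le (div_nonneg (mul_nonneg (sq_nonneg h₂) (by linarith)) (by norm_num)))]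
  congr 1
  ring

private lemma volume_inter_std (R₀ R₁ d h₁ h₂ : ℝ) (hR₀ : 0 < R₀) (hR₁ : R₀ ≤ R₁)
    (hd0 : R₁ - R₀ ≤ d) (hd : d ≤ R₁ + R₀)
    (hh₁ : h₁ = d - R₁ + (R₀ ^ 2 + R₁ ^ 2 - d ^ 2) / (2 * R₁))
    (hh₂ : h₂ = R₀ - (R₀ ^ 2 + R₁ ^ 2 - d ^ 2) / (2 * R₁)) :
    volume (Metric.closedBall (0 : EuclideanSpace ℝ (Fin 3)) R₀ ∩
      Metric.closedBall (R₁ • EuclideanSpace.single (0 : Fin 3) (1 : ℝ)) d) =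
    ENNReal.ofReal (π / 3 * (h₁ ^ 2 * (3 * d - h₁) + h₂ ^ 2 * (3 * R₀ - h₂))) := by
  have hdpos : (0:ℝ) ≤ d := by linarith
  rw [← (PiLp.volume_preserving_toLp (Fin 3)).measure_preimage
    ((measurableSet_closedBall.inter measurableSet_closedBall).nullMeasurableSet)]
  have hpre1 : (WithLp.toLp 2 : (Fin 3 → ℝ) → EuclideanSpace ℝ (Fin 3)) ⁻¹'
      (Metric.closedBall (0 : EuclideanSpace ℝ (Fin 3)) R₀ ∩
        Metric.closedBall (R₁ • EuclideanSpace.single (0 : Fin 3) (1 : ℝ)) d) =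
      {y : Fin 3 → ℝ | y 0 ^ 2 + y 1 ^ 2 + y 2 ^ 2 ≤ R₀ ^ 2 ∧
        (y 0 - R₁) ^ 2 + y 1 ^ 2 + y 2 ^ 2 ≤ d ^ 2} := by
    ext y
    simp only [Set.mem_preimage, Set.mem_inter_iff, Metric.mem_closedBall, Set.mem_setOf_eq]
    rw [EuclideanSpace.dist_eq, EuclideanSpace.dist_eq, Real.sqrt_le_iff, Real.sqrt_le_iff]
    simp only [Fin.sum_univ_three, PiLp.toLp_apply, PiLp.smul_apply,
      EuclideanSpace.single_apply, smul_eq_mul, Real.dist_eq, PiLp.zero_apply, sub_zero, sq_abs]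
    norm_num
    simp only [if_neg (show ¬ (2:Fin 3) = 0 by decide), sub_zero]
    have := hR₀.le
    tauto
  rw [hpre1]
  -- slice through the first coordinate
  set B : Set (ℝ × (Fin 2 → ℝ)) := {p | p.1 ^ 2 + (p.2 0) ^ 2 + (p.2 1) ^ 2 ≤ R₀ ^ 2 ∧
      (p.1 - R₁) ^ 2 + (p.2 0) ^ 2 + (p.2 1) ^ 2 ≤ d ^ 2} with hBdef
  have hma : Measurable fun p : ℝ × (Fin 2 → ℝ) => p.2 0 :=
    (measurable_pi_apply 0).comp measurable_snd
  have hmb : Measurable fun p : ℝ × (Fin 2 → ℝ) => p.2 1 :=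
    (measurable_pi_apply 1).comp measurable_snd
  have m1 : Measurable fun p : ℝ × (Fin 2 → ℝ) => p.1 ^ 2 + (p.2 0) ^ 2 + (p.2 1) ^ 2 :=
    ((measurable_fst.pow_const 2).add (hma.pow_const 2)).add (hmb.pow_const 2)
  have m2 : Measurable fun p : ℝ × (Fin 2 → ℝ) => (p.1 - R₁) ^ 2 + (p.2 0) ^ 2 + (p.2 1) ^ 2 :=
    (((measurable_fst.sub_const R₁).pow_const 2).add (hma.pow_const 2)).add (hmb.pow_const 2)
  have hB : MeasurableSet B := by
    rw [hBdef, Set.setOf_and]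
    exact (measurableSet_le m1 measurable_const).inter (measurableSet_le m2 measurable_const)
  have hpre : (MeasurableEquiv.piFinSuccAbove (fun _ : Fin 3 => ℝ) 0) ⁻¹' B =
      {y : Fin 3 → ℝ | y 0 ^ 2 + y 1 ^ 2 + y 2 ^ 2 ≤ R₀ ^ 2 ∧
        (y 0 - R₁) ^ 2 + y 1 ^ 2 + y 2 ^ 2 ≤ d ^ 2} := by
    ext y
    simp [hBdef, MeasurableEquiv.piFinSuccAbove, Fin.succAbove, Fin.tail,
      show Fin.succ (0:Fin 2) = 1 from rfl, show Fin.succ (1:Fin 2) = 2 from rfl]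
  rw [← hpre, (volume_preserving_piFinSuccAbove (fun _ : Fin 3 => ℝ) 0).measure_preimage
    hB.nullMeasurableSet, Measure.volume_eq_prod, Measure.prod_apply hB]
  have hslices : ∀ t : ℝ, volume (Prod.mk t ⁻¹' B) =
      ENNReal.ofReal (π * min (R₀ ^ 2 - t ^ 2) (d ^ 2 - (t - R₁) ^ 2)) := by
    intro t
    have hslice : (Prod.mk t ⁻¹' B) =
        {z : Fin 2 → ℝ | z 0 ^ 2 + z 1 ^ 2 ≤ min (R₀ ^ 2 - t ^ 2) (d ^ 2 - (t - R₁) ^ 2)} := by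
      ext z
      simp only [hBdef, Set.mem_preimage, Set.mem_setOf_eq, le_min_iff]
      constructor
      · rintro ⟨ha, hb⟩; constructor <;> linarith
      · rintro ⟨ha, hb⟩; constructor <;> linarith
    rw [hslice, volume_disk]
  rw [lintegral_congr hslices]
  exact lintegral_caps R₀ R₁ d h₁ h₂ hR₀ hR₁ hd0 hd hh₁ hh₂

private lemma volume_ball3 (x : EuclideanSpace ℝ (Fin 3)) (r : ℝ) (hr : 0 ≤ r) :
    volume (Metric.closedBall x r) = ENNReal.ofReal (4 * π * r ^ 3 / 3) := by
  rw [EuclideanSpace.volume_closedBall]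
  simp only [Fintype.card_fin]
  rw [← ENNReal.ofReal_pow hr, ← ENNReal.ofReal_mul (by positivity)]
  congr 1
  have hg : Real.Gamma (((3:ℕ):ℝ) / 2 + 1) = 3 / 4 * Real.sqrt π := by
    rw [show (((3:ℕ):ℝ) / 2 + 1) = 3/2 + 1 by norm_num, Real.Gamma_add_one (by norm_num),
      show ((3:ℝ)/2) = 1/2 + 1 by norm_num, Real.Gamma_add_one (by norm_num),
      Real.Gamma_one_half_eq]
    ring
  rw [hg]
  have hs : Real.sqrt π ^ 3 = π * Real.sqrt π := by
    rw [pow_succ, Real.sq_sqrt Real.pi_pos.le]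
  rw [hs]
  have hsp : (0:ℝ) < Real.sqrt π := Real.sqrt_pos.mpr Real.pi_pos
  field_simp

/-- For `X` uniform on `B(S₀, R₀) ⊂ ℝ³`, `P` at distance `R₁ ≥ R₀` from `S₀`, and
`D = ‖P - X‖₂`: for `R₁ - R₀ ≤ d ≤ R₁ + R₀`,
`P(D ≤ d) = [h₁(d)²(3d - h₁(d)) + h₂(d)²(3R₀ - h₂(d))]/(4R₀³)`, with
`h₁(d) = d - R₁ + (R₀² + R₁² - d²)/(2R₁)` and `h₂(d) = R₀ - (R₀² + R₁² - d²)/(2R₁)`. -/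
theorem cdf_dist_uniform_ball_exterior
    {Ω : Type*} [MeasurableSpace Ω] (μ : Measure Ω) [IsProbabilityMeasure μ]
    (R₀ R₁ : ℝ) (hR₀ : 0 < R₀) (S₀ P : EuclideanSpace ℝ (Fin 3))
    (hR₁ : dist P S₀ = R₁) (hR₁ge : R₀ ≤ R₁)
    (X : Ω → EuclideanSpace ℝ (Fin 3)) (hX : Measurable X)
    (hunif : Measure.map X μ =
      (volume (Metric.closedBall S₀ R₀))⁻¹ • volume.restrict (Metric.closedBall S₀ R₀))
    (d : ℝ) (hd0 : R₁ - R₀ ≤ d) (hd : d ≤ R₁ + R₀)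
    (h₁ h₂ : ℝ)
    (hh₁ : h₁ = d - R₁ + (R₀ ^ 2 + R₁ ^ 2 - d ^ 2) / (2 * R₁))
    (hh₂ : h₂ = R₀ - (R₀ ^ 2 + R₁ ^ 2 - d ^ 2) / (2 * R₁)) :
    μ {ω | dist P (X ω) ≤ d} =
      ENNReal.ofReal ((h₁ ^ 2 * (3 * d - h₁) + h₂ ^ 2 * (3 * R₀ - h₂)) / (4 * R₀ ^ 3)) := by
  have hR₁0 : (0:ℝ) < R₁ := lt_of_lt_of_le hR₀ hR₁ge
  have hPS : P - S₀ ≠ 0 := by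
    intro h
    rw [sub_eq_zero] at h
    rw [h, dist_self] at hR₁
    exact absurd hR₁.symm (ne_of_gt hR₁0)
  -- rewrite event as preimage of a closed ball
  have hev : {ω | dist P (X ω) ≤ d} = X ⁻¹' (Metric.closedBall P d) := by
    ext ω
    simp [Metric.mem_closedBall, dist_comm]
  rw [hev, ← Measure.map_apply hX measurableSet_closedBall, hunif, Measure.smul_apply,
    Measure.restrict_apply measurableSet_closedBall, smul_eq_mul]
  -- move the intersection into standard position
  have hnormPS : ‖P - S₀‖ = R₁ := by rw [← dist_eq_norm]; exact hR₁
  obtain ⟨f, hf⟩ := exists_rot (P - S₀) hPS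
  rw [hnormPS] at hf
  have htrans : ((· + S₀) : EuclideanSpace ℝ (Fin 3) → EuclideanSpace ℝ (Fin 3)) ⁻¹'
      (Metric.closedBall P d ∩ Metric.closedBall S₀ R₀) =
      Metric.closedBall (P - S₀) d ∩ Metric.closedBall 0 R₀ := by
    ext x
    simp only [Set.mem_preimage, Set.mem_inter_iff, Metric.mem_closedBall, dist_eq_norm]
    rw [show x + S₀ - P = x - (P - S₀) by abel, show x + S₀ - S₀ = x - 0 by abel]
  have hrot : f ⁻¹' (Metric.closedBall (0 : EuclideanSpace ℝ (Fin 3)) R₀ ∩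
      Metric.closedBall (R₁ • EuclideanSpace.single (0 : Fin 3) (1 : ℝ)) d) =
      Metric.closedBall (P - S₀) d ∩ Metric.closedBall 0 R₀ := by
    rw [Set.preimage_inter, LinearIsometryEquiv.preimage_closedBall,
      LinearIsometryEquiv.preimage_closedBall, map_zero,
      show f.symm (R₁ • EuclideanSpace.single (0 : Fin 3) (1 : ℝ)) = P - S₀ by
        rw [← hf, f.symm_apply_apply]]
    exact Set.inter_comm _ _
  have hvol : volume (Metric.closedBall P d ∩ Metric.closedBall S₀ R₀) =
      ENNReal.ofReal (π / 3 * (h₁ ^ 2 * (3 * d - h₁) + h₂ ^ 2 * (3 * R₀ - h₂))) := by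
    rw [← (measurePreserving_add_right volume S₀).measure_preimage
      ((measurableSet_closedBall.inter measurableSet_closedBall).nullMeasurableSet),
      htrans, ← hrot, f.measurePreserving.measure_preimage
        ((measurableSet_closedBall.inter measurableSet_closedBall).nullMeasurableSet)]
    exact volume_inter_std R₀ R₁ d h₁ h₂ hR₀ hR₁ge hd0 hd hh₁ hh₂
  rw [hvol, volume_ball3 S₀ R₀ hR₀.le]
  rw [← ENNReal.div_eq_inv_mul, ← ENNReal.ofReal_div_of_pos (by positivity)]
  congr 1
  rw [div_eq_div_iff (by positivity) (by positivity : (4 * R₀ ^ 3 : ℝ) ≠ 0)]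
  ring
end

section
/- For R₁ ≥ R₀ > 0 and R₁ - R₀ ≤ d ≤ R₁ + R₀, the Lebesgue measure of the intersection B(0, R₀) ∩ B((R₁,0,0), d) of two closed balls in ℝ³ equals V(d, h₁(d)) + V(R₀, h₂(d)), where V(R,h) = πh²(3R-h)/3, h₁(d) = d - R₁ + (R₀² + R₁² - d²)/(2R₁), and h₂(d) = R₀ - (R₀² + R₁² - d²)/(2R₁). -/
open Real MeasureTheory

lemma disk_vol' (s : ℝ) :
    volume {p : Fin 2 → ℝ | p 0 ^ 2 + p 1 ^ 2 ≤ s} = ENNReal.ofReal (π * s) := by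
  rcases lt_or_ge s 0 with hs | hs
  · have : {p : Fin 2 → ℝ | p 0 ^ 2 + p 1 ^ 2 ≤ s} = ∅ := by
      ext p; simp only [Set.mem_setOf_eq, Set.mem_empty_iff_false, iff_false]
      nlinarith [sq_nonneg (p 0), sq_nonneg (p 1)]
    rw [this, measure_empty, Eq.comm, ENNReal.ofReal_eq_zero]
    nlinarith [pi_pos]
  · have hpre : ((MeasurableEquiv.toLp 2 (Fin 2 → ℝ)).symm) ⁻¹' {p : Fin 2 → ℝ | p 0 ^ 2 + p 1 ^ 2 ≤ s}
        = Metric.closedBall (0 : EuclideanSpace ℝ (Fin 2)) (Real.sqrt s) := by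
      ext x
      simp only [Set.mem_preimage, Set.mem_setOf_eq, Metric.mem_closedBall, dist_zero_right,
        EuclideanSpace.norm_eq, Fin.sum_univ_two, Real.norm_eq_abs, sq_abs]
      rw [show ((MeasurableEquiv.toLp 2 (Fin 2 → ℝ)).symm) x = (x : Fin 2 → ℝ) from rfl]
      rw [Real.sqrt_le_sqrt_iff hs]
    have hmeas : MeasurableSet {p : Fin 2 → ℝ | p 0 ^ 2 + p 1 ^ 2 ≤ s} := by
      apply measurableSet_le <;> fun_prop
    calc volume {p : Fin 2 → ℝ | p 0 ^ 2 + p 1 ^ 2 ≤ s}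
        = volume (((MeasurableEquiv.toLp 2 (Fin 2 → ℝ)).symm) ⁻¹' {p | p 0 ^ 2 + p 1 ^ 2 ≤ s}) :=
          ((EuclideanSpace.volume_preserving_symm_measurableEquiv_toLp (Fin 2)).measure_preimage
            hmeas.nullMeasurableSet).symm
      _ = volume (Metric.closedBall (0 : EuclideanSpace ℝ (Fin 2)) (Real.sqrt s)) := by rw [hpre]
      _ = ENNReal.ofReal (π * s) := by
          rw [EuclideanSpace.volume_closedBall]
          simp only [Fintype.card_fin]
          rw [show ((2:ℕ):ℝ)/2 + 1 = 2 by norm_num, Real.Gamma_two]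
          rw [← ENNReal.ofReal_pow (Real.sqrt_nonneg s), Real.sq_sqrt hs,
            ← ENNReal.ofReal_mul hs]
          rw [Real.sq_sqrt (le_of_lt pi_pos)]
          ring_nf

lemma cap_vol' (c R l u : ℝ) :
    volume {y : Fin 3 → ℝ | (y 0 - c) ^ 2 + y 1 ^ 2 + y 2 ^ 2 ≤ R ^ 2 ∧ y 0 ∈ Set.Icc l u}
      = ∫⁻ t in Set.Icc l u, ENNReal.ofReal (π * (R ^ 2 - (t - c) ^ 2)) := by
  set T : Set (ℝ × (Fin 2 → ℝ)) :=
    {q | (q.1 - c) ^ 2 + q.2 0 ^ 2 + q.2 1 ^ 2 ≤ R ^ 2 ∧ q.1 ∈ Set.Icc l u} with hT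
  have hTm : MeasurableSet T := by
    have h2 : T = {q : ℝ × (Fin 2 → ℝ) | (q.1 - c) ^ 2 + q.2 0 ^ 2 + q.2 1 ^ 2 ≤ R ^ 2}
        ∩ (Prod.fst ⁻¹' Set.Icc l u) := rfl
    rw [h2]
    exact (measurableSet_le (by fun_prop) (by fun_prop)).inter
      (measurable_fst measurableSet_Icc)
  have mp := measurePreserving_piFinSuccAbove (fun _ : Fin 3 => (volume : Measure ℝ)) 0
  have hpre : (MeasurableEquiv.piFinSuccAbove (fun _ : Fin 3 => ℝ) 0) ⁻¹' T
      = {y : Fin 3 → ℝ | (y 0 - c) ^ 2 + y 1 ^ 2 + y 2 ^ 2 ≤ R ^ 2 ∧ y 0 ∈ Set.Icc l u} := by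
    ext y
    simp only [Set.mem_preimage, MeasurableEquiv.piFinSuccAbove_apply, hT, Set.mem_setOf_eq]
    rfl
  rw [← hpre, volume_pi, mp.measure_preimage hTm.nullMeasurableSet, Measure.prod_apply hTm]
  simp_rw [← volume_pi]
  rw [← lintegral_indicator measurableSet_Icc]
  congr 1 with t
  rcases em (t ∈ Set.Icc l u) with ht | ht
  · rw [Set.indicator_of_mem ht]
    have h3 : Prod.mk t ⁻¹' T = {p : Fin 2 → ℝ | p 0 ^ 2 + p 1 ^ 2 ≤ R ^ 2 - (t - c) ^ 2} := by
      ext p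
      simp only [Set.mem_preimage, hT, Set.mem_setOf_eq, ht, and_true]
      constructor <;> intro h <;> linarith
    rw [h3, disk_vol']
  · rw [Set.indicator_of_notMem ht]
    have h3 : Prod.mk t ⁻¹' T = ∅ := by
      ext p
      simp only [Set.mem_preimage, hT, Set.mem_setOf_eq, ht, and_false,
        Set.mem_empty_iff_false]
    rw [h3, measure_empty]

lemma cap_int' (c R l u : ℝ) (hlu : l ≤ u) (hl : c - R ≤ l) (hu : u ≤ c + R) :
    (∫⁻ t in Set.Icc l u, ENNReal.ofReal (π * (R ^ 2 - (t - c) ^ 2)))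
      = ENNReal.ofReal (π * (R ^ 2 * (u - l) - ((u - c) ^ 3 - (l - c) ^ 3) / 3)) := by
  have hR : 0 ≤ R := by linarith
  have hderiv : ∀ t : ℝ, HasDerivAt (fun t => π * (R ^ 2 * t - (t - c) ^ 3 / 3))
      (π * (R ^ 2 - (t - c) ^ 2)) t := by
    intro t
    have h1 : HasDerivAt (fun t : ℝ => (t - c) ^ 3) (3 * (t - c) ^ 2) t := by
      simpa using ((hasDerivAt_id t).sub_const c).fun_pow 3
    have h2 := (((hasDerivAt_id t).const_mul (R ^ 2)).sub (h1.div_const 3)).const_mul π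
    exact h2.congr_deriv (by ring)
  have hcont : Continuous fun t : ℝ => π * (R ^ 2 - (t - c) ^ 2) := by continuity
  have hInt : ∫ t in l..u, π * (R ^ 2 - (t - c) ^ 2)
      = π * (R ^ 2 * (u - l) - ((u - c) ^ 3 - (l - c) ^ 3) / 3) := by
    rw [intervalIntegral.integral_eq_sub_of_hasDerivAt (fun t _ => hderiv t)
      (hcont.intervalIntegrable l u)]
    ring
  rw [Measure.restrict_congr_set Ioc_ae_eq_Icc.symm]
  rw [← ofReal_integral_eq_lintegral_ofReal]
  · rw [← intervalIntegral.integral_of_le hlu, hInt]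
  · exact (hcont.integrableOn_Ioc)
  · filter_upwards [ae_restrict_mem measurableSet_Ioc] with t ht
    have h1 : (t - c) ^ 2 ≤ R ^ 2 := by
      obtain ⟨h2, h3⟩ := ht
      nlinarith
    simp only [Pi.zero_apply]
    nlinarith [pi_pos]

/-- For `R₁ ≥ R₀ > 0` and `R₁ - R₀ ≤ d ≤ R₁ + R₀`, the volume of the intersection of
the closed balls `B(0, R₀)` and `B((R₁,0,0), d)` in `ℝ³` is `V(d, h₁(d)) + V(R₀, h₂(d))`
where `V(R, h) = π h² (3R - h)/3`. -/
theorem volume_inter_balls (R₀ R₁ d : ℝ) (hR₀ : 0 < R₀) (hR₁ : R₀ ≤ R₁)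
    (hd0 : R₁ - R₀ ≤ d) (hd : d ≤ R₁ + R₀)
    (h₁ h₂ : ℝ)
    (hh₁ : h₁ = d - R₁ + (R₀ ^ 2 + R₁ ^ 2 - d ^ 2) / (2 * R₁))
    (hh₂ : h₂ = R₀ - (R₀ ^ 2 + R₁ ^ 2 - d ^ 2) / (2 * R₁)) :
    volume (Metric.closedBall (0 : EuclideanSpace ℝ (Fin 3)) R₀ ∩
        Metric.closedBall ((WithLp.equiv 2 (Fin 3 → ℝ)).symm ![R₁, 0, 0]) d) =
      ENNReal.ofReal (π * h₁ ^ 2 * (3 * d - h₁) / 3 + π * h₂ ^ 2 * (3 * R₀ - h₂) / 3) := by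
  have hR₁pos : (0:ℝ) < R₁ := lt_of_lt_of_le hR₀ hR₁
  have hdpos : (0:ℝ) ≤ d := by linarith
  set a : ℝ := (R₀ ^ 2 + R₁ ^ 2 - d ^ 2) / (2 * R₁) with ha
  have ha2 : 2 * R₁ * a = R₀ ^ 2 + R₁ ^ 2 - d ^ 2 := by
    rw [ha]; field_simp
  have haR₀ : a ≤ R₀ := by nlinarith
  have hlB : R₁ - d ≤ a := by nlinarith
  have haneg : -R₀ ≤ a := by linarith
  -- transfer to `Fin 3 → ℝ`
  set S := Metric.closedBall (0 : EuclideanSpace ℝ (Fin 3)) R₀ ∩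
        Metric.closedBall ((WithLp.equiv 2 (Fin 3 → ℝ)).symm ![R₁, 0, 0]) d with hS
  have hSm : MeasurableSet S := Metric.isClosed_closedBall.measurableSet.inter
    Metric.isClosed_closedBall.measurableSet
  have htrans : volume S
      = volume (((MeasurableEquiv.toLp 2 (Fin 3 → ℝ)).symm).symm ⁻¹' S) :=
    ((MeasurePreserving.symm _ (EuclideanSpace.volume_preserving_symm_measurableEquiv_toLp (Fin 3))).measure_preimage
      hSm.nullMeasurableSet).symm
  set A : Set (Fin 3 → ℝ) :=
    {y | (y 0 - 0) ^ 2 + y 1 ^ 2 + y 2 ^ 2 ≤ R₀ ^ 2 ∧ y 0 ∈ Set.Icc a R₀} with hA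
  set B : Set (Fin 3 → ℝ) :=
    {y | (y 0 - R₁) ^ 2 + y 1 ^ 2 + y 2 ^ 2 ≤ d ^ 2 ∧ y 0 ∈ Set.Icc (R₁ - d) a} with hB
  have hpre : ((MeasurableEquiv.toLp 2 (Fin 3 → ℝ)).symm).symm ⁻¹' S = A ∪ B := by
    have hW : ((MeasurableEquiv.toLp 2 (Fin 3 → ℝ)).symm).symm ⁻¹' S =
        {y : Fin 3 → ℝ | y 0 ^ 2 + y 1 ^ 2 + y 2 ^ 2 ≤ R₀ ^ 2 ∧
          (y 0 - R₁) ^ 2 + y 1 ^ 2 + y 2 ^ 2 ≤ d ^ 2} := by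
      ext y
      simp only [hS, Set.mem_preimage, Set.mem_inter_iff, Metric.mem_closedBall,
        Set.mem_setOf_eq, EuclideanSpace.dist_eq, Fin.sum_univ_three, Real.dist_eq]
      rw [show (((MeasurableEquiv.toLp 2 (Fin 3 → ℝ)).symm).symm y) 0 = y 0 from rfl,
          show (((MeasurableEquiv.toLp 2 (Fin 3 → ℝ)).symm).symm y) 1 = y 1 from rfl,
          show (((MeasurableEquiv.toLp 2 (Fin 3 → ℝ)).symm).symm y) 2 = y 2 from rfl,
          show ((WithLp.equiv 2 (Fin 3 → ℝ)).symm ![R₁, 0, 0]) 0 = R₁ from rfl,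
          show ((WithLp.equiv 2 (Fin 3 → ℝ)).symm ![R₁, 0, 0]) 1 = 0 from rfl,
          show ((WithLp.equiv 2 (Fin 3 → ℝ)).symm ![R₁, 0, 0]) 2 = 0 from rfl,
          show ((0 : EuclideanSpace ℝ (Fin 3))) 0 = 0 from rfl,
          show ((0 : EuclideanSpace ℝ (Fin 3))) 1 = 0 from rfl,
          show ((0 : EuclideanSpace ℝ (Fin 3))) 2 = 0 from rfl]
      simp only [sub_zero, sq_abs]
      rw [show R₀ = Real.sqrt (R₀ ^ 2) by rw [Real.sqrt_sq hR₀.le],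
          show d = Real.sqrt (d ^ 2) by rw [Real.sqrt_sq hdpos]]
      rw [Real.sqrt_le_sqrt_iff (by positivity), Real.sqrt_le_sqrt_iff (by positivity)]
      rw [Real.sq_sqrt (by positivity : (0:ℝ) ≤ R₀ ^ 2),
        Real.sq_sqrt (by positivity : (0:ℝ) ≤ d ^ 2)]
    rw [hW]
    ext y
    simp only [Set.mem_setOf_eq, Set.mem_union, hA, hB, Set.mem_Icc, sub_zero]
    constructor
    · rintro ⟨h1, h2⟩
      rcases le_total a (y 0) with hy | hy
      · left
        refine ⟨h1, hy, ?_⟩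
        nlinarith [sq_nonneg (y 1), sq_nonneg (y 2)]
      · right
        refine ⟨h2, ?_, hy⟩
        nlinarith [sq_nonneg (y 1), sq_nonneg (y 2)]
    · rintro (⟨h1, hy1, hy2⟩ | ⟨h1, hy1, hy2⟩)
      · exact ⟨h1, by nlinarith⟩
      · exact ⟨by nlinarith, h1⟩
  have hAm : MeasurableSet A := by
    have h2 : A = {y : Fin 3 → ℝ | (y 0 - 0) ^ 2 + y 1 ^ 2 + y 2 ^ 2 ≤ R₀ ^ 2}
        ∩ ((fun y : Fin 3 → ℝ => y 0) ⁻¹' Set.Icc a R₀) := rfl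
    rw [h2]
    exact (measurableSet_le (by fun_prop) (by fun_prop)).inter
      ((measurable_pi_apply 0) measurableSet_Icc)
  have hBm : MeasurableSet B := by
    have h2 : B = {y : Fin 3 → ℝ | (y 0 - R₁) ^ 2 + y 1 ^ 2 + y 2 ^ 2 ≤ d ^ 2}
        ∩ ((fun y : Fin 3 → ℝ => y 0) ⁻¹' Set.Icc (R₁ - d) a) := rfl
    rw [h2]
    exact (measurableSet_le (by fun_prop) (by fun_prop)).inter
      ((measurable_pi_apply 0) measurableSet_Icc)
  have hplane : volume {y : Fin 3 → ℝ | y 0 = a} = 0 := by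
    have hset : {y : Fin 3 → ℝ | y 0 = a}
        = Set.pi Set.univ (fun i : Fin 3 => if i = 0 then {a} else Set.univ) := by
      ext y
      constructor
      · intro h i _
        rcases eq_or_ne i 0 with rfl | hi
        · simpa using h
        · simp [hi]
      · intro h
        have := h 0 (Set.mem_univ 0)
        simpa using this
    rw [hset, volume_pi_pi]
    rw [Fin.prod_univ_three]
    simp [Real.volume_singleton]
  have hI : volume (A ∩ B) = 0 := by
    refine measure_mono_null ?_ hplane
    rintro y ⟨⟨_, hy1, _⟩, ⟨_, _, hy2⟩⟩
    exact le_antisymm hy2 hy1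
  have hU := measure_union_add_inter (μ := volume) A hBm
  rw [hI, add_zero] at hU
  have hvA : volume A = ENNReal.ofReal
      (π * (R₀ ^ 2 * (R₀ - a) - ((R₀ - 0) ^ 3 - (a - 0) ^ 3) / 3)) := by
    rw [hA, cap_vol' 0 R₀ a R₀, cap_int' 0 R₀ a R₀ haR₀ (by linarith) (by linarith)]
  have hvB : volume B = ENNReal.ofReal
      (π * (d ^ 2 * (a - (R₁ - d)) - ((a - R₁) ^ 3 - ((R₁ - d) - R₁) ^ 3) / 3)) := by
    rw [hB, cap_vol' R₁ d (R₁ - d) a, cap_int' R₁ d (R₁ - d) a hlB (by linarith) (by linarith)]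
  have hnnA : (0:ℝ) ≤ π * (R₀ ^ 2 * (R₀ - a) - ((R₀ - 0) ^ 3 - (a - 0) ^ 3) / 3) := by
    have key : R₀ ^ 2 * (R₀ - a) - ((R₀ - 0) ^ 3 - (a - 0) ^ 3) / 3
        = (R₀ - a) ^ 2 * (2 * R₀ + a) / 3 := by ring
    rw [key]
    have : (0:ℝ) ≤ 2 * R₀ + a := by linarith
    positivity
  have hnnB : (0:ℝ) ≤ π * (d ^ 2 * (a - (R₁ - d)) - ((a - R₁) ^ 3 - ((R₁ - d) - R₁) ^ 3) / 3) := by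
    have key : d ^ 2 * (a - (R₁ - d)) - ((a - R₁) ^ 3 - ((R₁ - d) - R₁) ^ 3) / 3
        = (a - (R₁ - d)) ^ 2 * (2 * d + (R₁ - a)) / 3 := by ring
    rw [key]
    have h1 : (0:ℝ) ≤ R₁ - a := by linarith
    have : (0:ℝ) ≤ 2 * d + (R₁ - a) := by linarith
    positivity
  rw [htrans, hpre, hU, hvA, hvB, ← ENNReal.ofReal_add hnnA hnnB]
  congr 1
  rw [hh₁, hh₂]
  ring
end

section
/- For R₁ ≥ R₀ > 0 and R₁ - R₀ ≤ d ≤ R₁ + R₀, the area (2-dimensional Lebesgue measure) of the intersection of the closed disks D(0, R₀) and D((R₁,0), d) in ℝ² equals A(d, h₁(d)) + A(R₀, h₂(d)), where A(R,h) = R²·arccos((R-h)/R) - (R-h)√(R² - (R-h)²), h₁(d) = d - R₁ + (R₀² + R₁² - d²)/(2R₁), and h₂(d) = R₀ - (R₀² + R₁² - d²)/(2R₁). -/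
open Real MeasureTheory intervalIntegral

lemma hasDerivAt_seg (R : ℝ) (hR : 0 < R) (x : ℝ) (hx : x ∈ Set.Ioo (-R) R) :
    HasDerivAt (fun x : ℝ => x * Real.sqrt (R^2 - x^2) + R^2 * Real.arcsin (x / R))
      (2 * Real.sqrt (R^2 - x^2)) x := by
  obtain ⟨hx1, hx2⟩ := hx
  have hpos : 0 < R^2 - x^2 := by nlinarith
  have hs0 : 0 < Real.sqrt (R^2 - x^2) := Real.sqrt_pos.2 hpos
  have h1 : HasDerivAt (fun x : ℝ => R^2 - x^2) (-(2*x)) x := by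
    simpa using ((hasDerivAt_pow 2 x).const_sub (R^2))
  have h2 : HasDerivAt (fun x : ℝ => Real.sqrt (R^2 - x^2))
      (-(2*x) / (2 * Real.sqrt (R^2 - x^2))) x := h1.sqrt hpos.ne'
  have h3 : HasDerivAt (fun x : ℝ => x * Real.sqrt (R^2 - x^2))
      (1 * Real.sqrt (R^2 - x^2) + x * (-(2*x) / (2 * Real.sqrt (R^2 - x^2)))) x :=
    (hasDerivAt_id x).mul h2
  have hd1 : x / R ≠ -1 := by intro h; rw [div_eq_iff hR.ne'] at h; nlinarith
  have hd2 : x / R ≠ 1 := by intro h; rw [div_eq_iff hR.ne'] at h; nlinarith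
  have h4 : HasDerivAt (fun x : ℝ => Real.arcsin (x / R))
      (1 / Real.sqrt (1 - (x/R)^2) * (1/R)) x :=
    HasDerivAt.comp (h₂ := Real.arcsin) x (Real.hasDerivAt_arcsin hd1 hd2) ((hasDerivAt_id' x).div_const R)
  have h5 := h3.add (h4.const_mul (R^2))
  refine h5.congr_deriv (Eq.symm ?_)
  have e1 : Real.sqrt (1 - (x/R)^2) = Real.sqrt (R^2 - x^2) / R := by
    rw [show (1 : ℝ) - (x/R)^2 = (R^2 - x^2)/R^2 by field_simp,
      Real.sqrt_div hpos.le, Real.sqrt_sq hR.le]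
  rw [e1]
  have hsq : Real.sqrt (R^2 - x^2) * Real.sqrt (R^2 - x^2) = R^2 - x^2 :=
    Real.mul_self_sqrt hpos.le
  field_simp
  linear_combination hsq

lemma integral_seg (R t : ℝ) (hR : 0 ≤ R) (ht1 : -R ≤ t) (ht2 : t ≤ R) :
    ∫ x in t..R, 2 * Real.sqrt (R^2 - x^2)
      = R^2 * Real.arccos (t/R) - t * Real.sqrt (R^2 - t^2) := by
  rcases eq_or_lt_of_le hR with h0 | hRpos
  · have hR0 : R = 0 := h0.symm
    have ht0 : t = 0 := le_antisymm (by simpa [hR0] using ht2) (by simpa [hR0] using ht1)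
    simp [hR0, ht0]
  · have hcont : Continuous (fun x : ℝ => 2 * Real.sqrt (R^2 - x^2)) := by
      continuity
    have key := intervalIntegral.integral_eq_sub_of_hasDeriv_right_of_le ht2
      (f := fun x : ℝ => x * Real.sqrt (R^2 - x^2) + R^2 * Real.arcsin (x / R))
      (f' := fun x : ℝ => 2 * Real.sqrt (R^2 - x^2))
      ((Continuous.continuousOn (by
        exact (continuous_id.mul (by continuity)).add
          ((continuous_const).mul (Real.continuous_arcsin.comp (continuous_id.div_const R))))))
      (fun x hx => (hasDerivAt_seg R hRpos x ⟨lt_of_le_of_lt ht1 hx.1, hx.2⟩).hasDerivWithinAt)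
      (hcont.intervalIntegrable t R)
    rw [key]
    simp only [div_self hRpos.ne', Real.arcsin_one, Real.arccos_eq_pi_div_two_sub_arcsin,
      sub_self, Real.sqrt_zero]
    ring

lemma integral_lens (R₀ R₁ d a : ℝ) (hR₀ : 0 < R₀) (hR₁ : R₀ ≤ R₁)
    (hd0 : R₁ - R₀ ≤ d) (hd : d ≤ R₁ + R₀)
    (ha : a = (R₀ ^ 2 + R₁ ^ 2 - d ^ 2) / (2 * R₁)) :
    ∫ x in (R₁ - d)..R₀, 2 * Real.sqrt (min (R₀^2 - x^2) (d^2 - (x - R₁)^2))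
      = (d ^ 2 * Real.arccos ((R₁ - a) / d) - (R₁ - a) * Real.sqrt (d ^ 2 - (R₁ - a) ^ 2)) +
        (R₀ ^ 2 * Real.arccos (a / R₀) - a * Real.sqrt (R₀ ^ 2 - a ^ 2)) := by
  have hR1pos : 0 < R₁ := lt_of_lt_of_le hR₀ hR₁
  have hdnn : 0 ≤ d := le_trans (by linarith) hd0
  have haR₀ : a ≤ R₀ := by rw [ha, div_le_iff₀ (by linarith)]; nlinarith
  have halo : R₁ - d ≤ a := by rw [ha, le_div_iff₀ (by linarith)]; nlinarith
  have hanR₀ : -R₀ ≤ a := by rw [ha, le_div_iff₀ (by linarith)]; nlinarith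
  have hcont : Continuous (fun x : ℝ => 2 * Real.sqrt (min (R₀^2 - x^2) (d^2 - (x - R₁)^2))) := by
    continuity
  rw [← intervalIntegral.integral_add_adjacent_intervals
    (hcont.intervalIntegrable (R₁ - d) a) (hcont.intervalIntegrable a R₀)]
  have e1 : ∫ x in (R₁ - d)..a, 2 * Real.sqrt (min (R₀^2 - x^2) (d^2 - (x - R₁)^2))
      = ∫ x in (R₁ - d)..a, 2 * Real.sqrt (d^2 - (x - R₁)^2) := by
    apply intervalIntegral.integral_congr
    intro x hx
    rw [Set.uIcc_of_le halo] at hx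
    have : d^2 - (x - R₁)^2 ≤ R₀^2 - x^2 := by
      have hxa : x ≤ a := hx.2
      rw [ha] at hxa
      have := (le_div_iff₀ (show (0:ℝ) < 2 * R₁ by linarith)).1 hxa
      nlinarith
    simp [min_eq_right this]
  have e2 : ∫ x in a..R₀, 2 * Real.sqrt (min (R₀^2 - x^2) (d^2 - (x - R₁)^2))
      = ∫ x in a..R₀, 2 * Real.sqrt (R₀^2 - x^2) := by
    apply intervalIntegral.integral_congr
    intro x hx
    rw [Set.uIcc_of_le haR₀] at hx
    have : R₀^2 - x^2 ≤ d^2 - (x - R₁)^2 := by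
      have hxa : a ≤ x := hx.1
      rw [ha] at hxa
      have := (div_le_iff₀ (show (0:ℝ) < 2 * R₁ by linarith)).1 hxa
      nlinarith
    simp [min_eq_left this]
  rw [e1, e2]
  have e3 : ∫ x in (R₁ - d)..a, 2 * Real.sqrt (d^2 - (x - R₁)^2)
      = ∫ x in (R₁ - a)..d, 2 * Real.sqrt (d^2 - x^2) := by
    rw [intervalIntegral.integral_comp_sub_right (fun u => 2 * Real.sqrt (d^2 - u^2)) R₁]
    have : ∀ x : ℝ, 2 * Real.sqrt (d^2 - x^2) = 2 * Real.sqrt (d^2 - (-x)^2) := by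
      intro x; rw [neg_pow]; ring_nf
    rw [intervalIntegral.integral_congr (g := fun x => 2 * Real.sqrt (d^2 - (-x)^2))
      (fun x _ => this x),
      intervalIntegral.integral_comp_neg (fun u => 2 * Real.sqrt (d^2 - u^2))]
    norm_num
  rw [e3, integral_seg d (R₁ - a) hdnn (by linarith) (by linarith),
    integral_seg R₀ a hR₀.le hanR₀ haR₀]

lemma volume_T (R₀ R₁ d : ℝ) (hR₀ : 0 ≤ R₀) (hd : 0 ≤ d) :
    volume {q : ℝ × ℝ | (Real.sqrt (q.1^2 + q.2^2) ≤ R₀) ∧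
        Real.sqrt ((q.1 - R₁)^2 + (q.2 - 0)^2) ≤ d}
    = ∫⁻ x : ℝ, ENNReal.ofReal (2 * Real.sqrt (min (R₀^2 - x^2) (d^2 - (x - R₁)^2))) := by
  have hT : MeasurableSet {q : ℝ × ℝ | (Real.sqrt (q.1^2 + q.2^2) ≤ R₀) ∧
      Real.sqrt ((q.1 - R₁)^2 + (q.2 - 0)^2) ≤ d} := by
    apply MeasurableSet.inter
    · exact (isClosed_le (Real.continuous_sqrt.comp (by fun_prop)) continuous_const).measurableSet
    · exact (isClosed_le (Real.continuous_sqrt.comp (by fun_prop)) continuous_const).measurableSet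
  rw [Measure.volume_eq_prod, Measure.prod_apply hT]
  congr 1
  ext x
  have hslice : Prod.mk x ⁻¹' {q : ℝ × ℝ | (Real.sqrt (q.1^2 + q.2^2) ≤ R₀) ∧
      Real.sqrt ((q.1 - R₁)^2 + (q.2 - 0)^2) ≤ d}
      = {y : ℝ | y^2 ≤ min (R₀^2 - x^2) (d^2 - (x - R₁)^2)} := by
    ext y
    simp only [Set.mem_preimage, Set.mem_setOf_eq, le_min_iff, sub_zero,
      Real.sqrt_le_left hR₀, Real.sqrt_le_left hd]
    constructor
    · rintro ⟨h1, h2⟩; constructor <;> linarith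
    · rintro ⟨h1, h2⟩; constructor <;> linarith
  rw [hslice]
  set m := min (R₀^2 - x^2) (d^2 - (x - R₁)^2) with hm
  rcases le_or_gt 0 m with hm0 | hm0
  · have h1 : {y : ℝ | y^2 ≤ m} = Set.Icc (-Real.sqrt m) (Real.sqrt m) := by
      ext y
      simp only [Set.mem_setOf_eq, Set.mem_Icc, ← abs_le]
      rw [Real.le_sqrt (abs_nonneg y) hm0, sq_abs]
    rw [h1, Real.volume_Icc]
    congr 1
    ring
  · have h1 : {y : ℝ | y^2 ≤ m} = ∅ := by
      ext y; simp only [Set.mem_setOf_eq, Set.mem_empty_iff_false, iff_false, not_le]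
      nlinarith [sq_nonneg y]
    rw [h1, Real.sqrt_eq_zero_of_nonpos hm0.le]
    simp

/-- For `R₁ ≥ R₀ > 0` and `R₁ - R₀ ≤ d ≤ R₁ + R₀`, the area of the intersection of the
closed disks `D(0, R₀)` and `D((R₁,0), d)` in `ℝ²` equals `A(d, h₁(d)) + A(R₀, h₂(d))`
where `A(R, h) = R² arccos((R-h)/R) - (R-h)√(R² - (R-h)²)`. -/
theorem area_inter_disks (R₀ R₁ d : ℝ) (hR₀ : 0 < R₀) (hR₁ : R₀ ≤ R₁)
    (hd0 : R₁ - R₀ ≤ d) (hd : d ≤ R₁ + R₀)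
    (h₁ h₂ : ℝ)
    (hh₁ : h₁ = d - R₁ + (R₀ ^ 2 + R₁ ^ 2 - d ^ 2) / (2 * R₁))
    (hh₂ : h₂ = R₀ - (R₀ ^ 2 + R₁ ^ 2 - d ^ 2) / (2 * R₁)) :
    volume (Metric.closedBall (0 : EuclideanSpace ℝ (Fin 2)) R₀ ∩
        Metric.closedBall ((WithLp.equiv 2 (Fin 2 → ℝ)).symm ![R₁, 0]) d) =
      ENNReal.ofReal
        ((d ^ 2 * Real.arccos ((d - h₁) / d) - (d - h₁) * Real.sqrt (d ^ 2 - (d - h₁) ^ 2)) +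
         (R₀ ^ 2 * Real.arccos ((R₀ - h₂) / R₀) -
            (R₀ - h₂) * Real.sqrt (R₀ ^ 2 - (R₀ - h₂) ^ 2))) := by
  set a := (R₀ ^ 2 + R₁ ^ 2 - d ^ 2) / (2 * R₁) with ha
  have hR1pos : 0 < R₁ := lt_of_lt_of_le hR₀ hR₁
  have hdnn : 0 ≤ d := le_trans (by linarith) hd0
  have hlohi : R₁ - d ≤ R₀ := by linarith
  set T : Set (ℝ × ℝ) := {q : ℝ × ℝ | (Real.sqrt (q.1^2 + q.2^2) ≤ R₀) ∧
      Real.sqrt ((q.1 - R₁)^2 + (q.2 - 0)^2) ≤ d} with hTdef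
  have hT : MeasurableSet T := by
    apply MeasurableSet.inter
    · exact (isClosed_le (Real.continuous_sqrt.comp (by fun_prop)) continuous_const).measurableSet
    · exact (isClosed_le (Real.continuous_sqrt.comp (by fun_prop)) continuous_const).measurableSet
  have hset : (Metric.closedBall (0 : EuclideanSpace ℝ (Fin 2)) R₀ ∩
        Metric.closedBall ((WithLp.equiv 2 (Fin 2 → ℝ)).symm ![R₁, 0]) d)
      = (⇑(MeasurableEquiv.finTwoArrow) ∘ ⇑(MeasurableEquiv.toLp 2 (Fin 2 → ℝ)).symm) ⁻¹' T := by
    ext p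
    simp only [hTdef, Set.mem_inter_iff, Metric.mem_closedBall, Set.mem_preimage,
      Set.mem_setOf_eq, EuclideanSpace.dist_eq, Fin.sum_univ_two, MeasurableEquiv.finTwoArrow,
      MeasurableEquiv.coe_toLp_symm, MeasurableEquiv.piFinTwo_apply, MeasurableEquiv.coe_mk,
      PiLp.toLp_apply, Real.dist_eq, sq_abs, Matrix.cons_val_zero, Matrix.cons_val_one,
      Matrix.head_cons, Pi.zero_apply, sub_zero, Equiv.coe_fn_mk, Function.comp_apply]
    simp [WithLp.equiv_symm_apply]
  have mp : MeasurePreserving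
      (⇑(MeasurableEquiv.finTwoArrow) ∘ ⇑(MeasurableEquiv.toLp 2 (Fin 2 → ℝ)).symm)
      (volume : Measure (EuclideanSpace ℝ (Fin 2))) (volume : Measure (ℝ × ℝ)) :=
    (volume_preserving_finTwoArrow ℝ).comp
      (EuclideanSpace.volume_preserving_symm_measurableEquiv_toLp (Fin 2))
  rw [hset, mp.measure_preimage hT.nullMeasurableSet, volume_T R₀ R₁ d hR₀.le hdnn]
  set g : ℝ → ℝ := fun x => 2 * Real.sqrt (min (R₀^2 - x^2) (d^2 - (x - R₁)^2)) with hg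
  have hgcont : Continuous g := by
    apply continuous_const.mul
    exact Real.continuous_sqrt.comp ((by fun_prop : Continuous fun x : ℝ => R₀^2 - x^2).min
      (by fun_prop))
  have hzero : ∀ x ∉ Set.Icc (R₁ - d) R₀, ENNReal.ofReal (g x) = 0 := by
    intro x hx
    rw [Set.mem_Icc, not_and_or, not_le, not_le] at hx
    have hmin : min (R₀^2 - x^2) (d^2 - (x - R₁)^2) ≤ 0 := by
      rcases hx with hx | hx
      · exact le_trans (min_le_right _ _) (by nlinarith)
      · exact le_trans (min_le_left _ _) (by nlinarith)
    rw [hg]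
    simp [Real.sqrt_eq_zero_of_nonpos hmin]
  have hind : ∀ x, ENNReal.ofReal (g x)
      = (Set.Icc (R₁ - d) R₀).indicator (fun x => ENNReal.ofReal (g x)) x := by
    intro x
    by_cases hx : x ∈ Set.Icc (R₁ - d) R₀
    · rw [Set.indicator_of_mem hx]
    · rw [Set.indicator_of_notMem hx, hzero x hx]
  rw [lintegral_congr hind, lintegral_indicator measurableSet_Icc]
  rw [← ofReal_integral_eq_lintegral_ofReal
    (hgcont.integrableOn_Icc) (Filter.Eventually.of_forall fun x => by positivity)]
  rw [MeasureTheory.integral_Icc_eq_integral_Ioc,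
    ← intervalIntegral.integral_of_le hlohi]
  have hkey : ∫ x in (R₁ - d)..R₀, g x
      = (d ^ 2 * Real.arccos ((R₁ - a) / d) - (R₁ - a) * Real.sqrt (d ^ 2 - (R₁ - a) ^ 2)) +
        (R₀ ^ 2 * Real.arccos (a / R₀) - a * Real.sqrt (R₀ ^ 2 - a ^ 2)) :=
    integral_lens R₀ R₁ d a hR₀ hR₁ hd0 hd ha
  rw [hkey]
  have e1 : d - h₁ = R₁ - a := by rw [hh₁, ha]; ring
  have e2 : R₀ - h₂ = a := by rw [hh₂, ha]; ring
  rw [e1, e2]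
end

section
/- Let X be uniformly distributed on a segment [A,B] ⊂ ℝ³ with A ≠ B, let P ∈ ℝ³, and suppose the projection P₀ of P onto line (AB) satisfies ⟨A - P₀, B - P₀⟩ > 0 (i.e., P₀ ∉ [A,B]). Set d_min = min(‖P-A‖₂, ‖P-B‖₂) and d_max = max(‖P-A‖₂, ‖P-B‖₂). Then for d_min ≤ d ≤ d_max, P(‖P - X‖₂ ≤ d) = (√(d² - ‖P-P₀‖₂²) - √(d_min² - ‖P-P₀‖₂²))/‖B - A‖₂. -/
open RealInnerProductSpace MeasureTheory

set_option maxHeartbeats 1000000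

private lemma le_of_sq_le_sq' {a b : ℝ} (hb : 0 ≤ b) (h : a ^ 2 ≤ b ^ 2) : a ≤ b :=
  le_trans (le_abs_self a)
    (by rw [← Real.sqrt_sq_eq_abs, ← Real.sqrt_sq hb]; exact Real.sqrt_le_sqrt h)

private lemma sq_le_sq_of_le {a b : ℝ} (ha : 0 ≤ a) (h : a ≤ b) : a ^ 2 ≤ b ^ 2 := by
  have := mul_le_mul h h ha (le_trans ha h)
  linarith

/-- CDF of the distance from `P` to a point uniform on segment `[A, B]` when the
projection `P₀` of `P` onto line `(AB)` falls outside the segment: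
for `d_min ≤ d ≤ d_max`,
`P(‖P - X‖ ≤ d) = (√(d² - ‖P-P₀‖²) - √(d_min² - ‖P-P₀‖²)) / ‖B - A‖`. -/
theorem cdf_dist_uniform_segment_proj_outside
    {Ω : Type*} [MeasurableSpace Ω] (μ : Measure Ω) [IsProbabilityMeasure μ]
    (A B P : EuclideanSpace ℝ (Fin 3)) (hAB : A ≠ B)
    (P₀ : EuclideanSpace ℝ (Fin 3))
    (hP₀ : P₀ = A + (⟪B - A, P - A⟫ / ‖B - A‖ ^ 2) • (B - A))
    (hout : 0 < ⟪A - P₀, B - P₀⟫)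
    (U : Ω → ℝ) (hU : Measurable U)
    (hUnif : Measure.map U μ = volume.restrict (Set.Icc (0 : ℝ) 1))
    (X : Ω → EuclideanSpace ℝ (Fin 3)) (hX : ∀ ω, X ω = A + U ω • (B - A))
    (dmin dmax : ℝ) (hdmin : dmin = min ‖P - A‖ ‖P - B‖)
    (hdmax : dmax = max ‖P - A‖ ‖P - B‖)
    (d : ℝ) (hd1 : dmin ≤ d) (hd2 : d ≤ dmax) :
    μ {ω | ‖P - X ω‖ ≤ d} =
      ENNReal.ofReal ((Real.sqrt (d ^ 2 - ‖P - P₀‖ ^ 2) -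
        Real.sqrt (dmin ^ 2 - ‖P - P₀‖ ^ 2)) / ‖B - A‖) := by
  have hvne : B - A ≠ 0 := sub_ne_zero.mpr (Ne.symm hAB)
  have hL : (0:ℝ) < ‖B - A‖ := norm_pos_iff.mpr hvne
  set L : ℝ := ‖B - A‖ with hLdef
  set t : ℝ := ⟪B - A, P - A⟫ / L ^ 2 with htdef
  have hLsq : (0:ℝ) < L ^ 2 := by positivity
  have htL : t * L ^ 2 = ⟪B - A, P - A⟫ := by
    rw [htdef]; field_simp
  have hP₀' : P₀ = A + t • (B - A) := hP₀
  have horth : ⟪P - P₀, B - A⟫ = 0 := by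
    have h1 : P - P₀ = (P - A) - t • (B - A) := by rw [hP₀']; abel
    rw [h1, inner_sub_left, real_inner_smul_left, real_inner_self_eq_norm_sq,
      ← hLdef]
    linarith [htL, real_inner_comm (P - A) (B - A)]
  have key : ∀ u : ℝ, ‖P - (A + u • (B - A))‖ ^ 2
      = ‖P - P₀‖ ^ 2 + (u - t) ^ 2 * L ^ 2 := by
    intro u
    have h1 : P - (A + u • (B - A)) = (P - P₀) + (t - u) • (B - A) := by
      rw [hP₀']; module
    rw [h1, norm_add_sq_real, real_inner_smul_right, horth, norm_smul,
      Real.norm_eq_abs, mul_pow, sq_abs, ← hLdef]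
    ring
  have hAP₀ : A - P₀ = (-t) • (B - A) := by rw [hP₀']; module
  have hBP₀ : B - P₀ = (1 - t) • (B - A) := by rw [hP₀']; module
  have houtval : ⟪A - P₀, B - P₀⟫ = (-t) * (1 - t) * L ^ 2 := by
    rw [hAP₀, hBP₀, real_inner_smul_left, real_inner_smul_right,
      real_inner_self_eq_norm_sq, ← hLdef]
    ring
  have ht01 : t < 0 ∨ 1 < t := by
    by_contra hcon
    push_neg at hcon
    obtain ⟨h0, h1⟩ := hcon
    rw [houtval] at hout
    nlinarith [mul_nonneg (mul_nonneg h0 (by linarith : (0:ℝ) ≤ 1 - t)) hLsq.le]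
  have hdA : ‖P - A‖ ^ 2 = ‖P - P₀‖ ^ 2 + t ^ 2 * L ^ 2 := by
    have h1 : A + (0:ℝ) • (B - A) = A := by simp
    have := key 0
    rw [h1] at this
    rw [this]; ring
  have hdB : ‖P - B‖ ^ 2 = ‖P - P₀‖ ^ 2 + (1 - t) ^ 2 * L ^ 2 := by
    have h1 : A + (1:ℝ) • (B - A) = B := by rw [one_smul]; abel
    have := key 1
    rw [h1] at this
    exact this
  have hh : (0:ℝ) ≤ ‖P - P₀‖ := norm_nonneg _
  have hdmin0 : 0 ≤ dmin := by
    rw [hdmin]; exact le_min (norm_nonneg _) (norm_nonneg _)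
  have hd0 : 0 ≤ d := le_trans hdmin0 hd1
  have hhA : ‖P - P₀‖ ≤ ‖P - A‖ := by
    refine le_of_sq_le_sq' (norm_nonneg _) ?_
    linarith [hdA, sq_nonneg (t * L), mul_pow t L 2]
  have hhB : ‖P - P₀‖ ≤ ‖P - B‖ := by
    refine le_of_sq_le_sq' (norm_nonneg _) ?_
    linarith [hdB, sq_nonneg ((1 - t) * L), mul_pow (1 - t) L 2]
  have hhmin : ‖P - P₀‖ ≤ dmin := by
    rw [hdmin]; exact le_min hhA hhB
  have hd2h : 0 ≤ d ^ 2 - ‖P - P₀‖ ^ 2 := by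
    linarith [sq_le_sq_of_le hh (le_trans hhmin hd1)]
  set s : ℝ := Real.sqrt (d ^ 2 - ‖P - P₀‖ ^ 2) / L with hsdef
  have hs0 : 0 ≤ s := div_nonneg (Real.sqrt_nonneg _) hL.le
  have hs2 : ‖P - P₀‖ ^ 2 + s ^ 2 * L ^ 2 = d ^ 2 := by
    rw [hsdef, div_pow, Real.sq_sqrt hd2h]
    field_simp
    ring
  have hset : {ω | ‖P - X ω‖ ≤ d} = U ⁻¹' Set.Icc (t - s) (t + s) := by
    ext ω
    simp only [Set.mem_setOf_eq, Set.mem_preimage, Set.mem_Icc, hX ω]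
    constructor
    · intro hle
      have h2 : ‖P - (A + U ω • (B - A))‖ ^ 2 ≤ d ^ 2 :=
        sq_le_sq_of_le (norm_nonneg _) hle
      have h3 : (U ω - t) ^ 2 * L ^ 2 ≤ s ^ 2 * L ^ 2 := by
        linarith [key (U ω), hs2]
      have hq : (U ω - t) ^ 2 ≤ s ^ 2 := le_of_mul_le_mul_right h3 hLsq
      have habs : |U ω - t| ≤ s := by
        rw [← Real.sqrt_sq hs0, ← Real.sqrt_sq_eq_abs]
        exact Real.sqrt_le_sqrt hq
      obtain ⟨ha, hb⟩ := abs_le.mp habs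
      constructor <;> linarith
    · rintro ⟨ha, hb⟩
      have hq : (U ω - t) ^ 2 ≤ s ^ 2 := by
        have := mul_nonneg (by linarith : (0:ℝ) ≤ U ω - (t - s))
          (by linarith : (0:ℝ) ≤ t + s - U ω)
        nlinarith [this]
      have h2 : ‖P - (A + U ω • (B - A))‖ ^ 2 ≤ d ^ 2 := by
        have := mul_le_mul_of_nonneg_right hq hLsq.le
        linarith [key (U ω)]
      calc ‖P - (A + U ω • (B - A))‖
          = Real.sqrt (‖P - (A + U ω • (B - A))‖ ^ 2) :=
            (Real.sqrt_sq (norm_nonneg _)).symm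
        _ ≤ Real.sqrt (d ^ 2) := Real.sqrt_le_sqrt h2
        _ = d := Real.sqrt_sq hd0
  rw [hset, ← Measure.map_apply hU measurableSet_Icc, hUnif,
    Measure.restrict_apply measurableSet_Icc, Set.Icc_inter_Icc]
  rcases ht01 with ht0 | ht1
  · -- t < 0 : dmin = ‖P-A‖, dmax = ‖P-B‖
    have hABle : ‖P - A‖ ≤ ‖P - B‖ := by
      refine le_of_sq_le_sq' (norm_nonneg _) ?_
      have := mul_pos (by linarith : (0:ℝ) < 1 - 2 * t) hLsq
      linarith [hdA, hdB]
    have hmin : dmin = ‖P - A‖ := by rw [hdmin, min_eq_left hABle]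
    have hmax : dmax = ‖P - B‖ := by rw [hdmax, max_eq_right hABle]
    have hd1' : ‖P - A‖ ≤ d := hmin ▸ hd1
    have hd2' : d ≤ ‖P - B‖ := hmax ▸ hd2
    have had : ‖P - A‖ ^ 2 ≤ d ^ 2 := sq_le_sq_of_le (norm_nonneg _) hd1'
    have hdb : d ^ 2 ≤ ‖P - B‖ ^ 2 := sq_le_sq_of_le hd0 hd2'
    have ht2s2 : t ^ 2 ≤ s ^ 2 := by
      have h3 : t ^ 2 * L ^ 2 ≤ s ^ 2 * L ^ 2 := by linarith [hdA, hs2]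
      exact le_of_mul_le_mul_right h3 hLsq
    have hs2t2 : s ^ 2 ≤ (1 - t) ^ 2 := by
      have h3 : s ^ 2 * L ^ 2 ≤ (1 - t) ^ 2 * L ^ 2 := by linarith [hdB, hs2]
      exact le_of_mul_le_mul_right h3 hLsq
    have hst : -t ≤ s := le_of_sq_le_sq' hs0 (by linarith [ht2s2])
    have hst1 : t + s ≤ 1 := by
      have := le_of_sq_le_sq' (by linarith : (0:ℝ) ≤ 1 - t) hs2t2
      linarith
    rw [max_eq_right (by linarith : t - s ≤ 0), min_eq_left hst1, Real.volume_Icc]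
    congr 1
    have hsq : Real.sqrt (dmin ^ 2 - ‖P - P₀‖ ^ 2) = -t * L := by
      have hQ : dmin ^ 2 - ‖P - P₀‖ ^ 2 = (-t * L) ^ 2 := by
        rw [hmin, hdA]; ring
      rw [hQ, Real.sqrt_sq (mul_nonneg (by linarith) hL.le)]
    rw [sub_zero, hsq, hsdef]
    field_simp
    ring
  · -- 1 < t : dmin = ‖P-B‖, dmax = ‖P-A‖
    have hBAle : ‖P - B‖ ≤ ‖P - A‖ := by
      refine le_of_sq_le_sq' (norm_nonneg _) ?_
      have := mul_pos (by linarith : (0:ℝ) < 2 * t - 1) hLsq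
      linarith [hdA, hdB]
    have hmin : dmin = ‖P - B‖ := by rw [hdmin, min_eq_right hBAle]
    have hmax : dmax = ‖P - A‖ := by rw [hdmax, max_eq_left hBAle]
    have hd1' : ‖P - B‖ ≤ d := hmin ▸ hd1
    have hd2' : d ≤ ‖P - A‖ := hmax ▸ hd2
    have had : d ^ 2 ≤ ‖P - A‖ ^ 2 := sq_le_sq_of_le hd0 hd2'
    have hdb : ‖P - B‖ ^ 2 ≤ d ^ 2 := sq_le_sq_of_le (norm_nonneg _) hd1'
    have hs2t2 : s ^ 2 ≤ t ^ 2 := by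
      have h3 : s ^ 2 * L ^ 2 ≤ t ^ 2 * L ^ 2 := by linarith [hdA, hs2]
      exact le_of_mul_le_mul_right h3 hLsq
    have ht2s2 : (t - 1) ^ 2 ≤ s ^ 2 := by
      have h3 : (t - 1) ^ 2 * L ^ 2 ≤ s ^ 2 * L ^ 2 := by linarith [hdB, hs2]
      exact le_of_mul_le_mul_right h3 hLsq
    have hst : s ≤ t := le_of_sq_le_sq' (by linarith : (0:ℝ) ≤ t) hs2t2
    have hst1 : t - 1 ≤ s := le_of_sq_le_sq' hs0 ht2s2
    rw [max_eq_left (by linarith : 0 ≤ t - s),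
      min_eq_right (by linarith : (1:ℝ) ≤ t + s), Real.volume_Icc]
    congr 1
    have hsq : Real.sqrt (dmin ^ 2 - ‖P - P₀‖ ^ 2) = (t - 1) * L := by
      have hQ : dmin ^ 2 - ‖P - P₀‖ ^ 2 = ((t - 1) * L) ^ 2 := by
        rw [hmin, hdB]; ring
      rw [hQ, Real.sqrt_sq (mul_nonneg (by linarith) hL.le)]
    rw [hsq, hsdef]
    field_simp
    ring
end

section
/- Let X be uniformly distributed on a segment [A,B] ⊂ ℝ³ with A ≠ B, let P ∈ ℝ³, and suppose the projection P₀ of P onto line (AB) lies in [A,B]. Set d_min = min(‖P-A‖₂, ‖P-B‖₂). Then for ‖P - P₀‖₂ ≤ d ≤ d_min, P(‖P - X‖₂ ≤ d) = 2√(d² - ‖P - P₀‖₂²)/‖B - A‖₂. -/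
open RealInnerProductSpace MeasureTheory

set_option maxHeartbeats 1200000 in
/-- CDF of the distance from `P` to a point uniform on segment `[A, B]` when the
projection `P₀` of `P` onto line `(AB)` lies in the segment:
for `‖P - P₀‖ ≤ d ≤ d_min`, `P(‖P - X‖ ≤ d) = 2√(d² - ‖P-P₀‖²) / ‖B - A‖`. -/
theorem cdf_dist_uniform_segment_proj_inside
    {Ω : Type*} [MeasurableSpace Ω] (μ : Measure Ω) [IsProbabilityMeasure μ]
    (A B P : EuclideanSpace ℝ (Fin 3)) (hAB : A ≠ B)
    (P₀ : EuclideanSpace ℝ (Fin 3))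
    (hP₀ : P₀ = A + (⟪B - A, P - A⟫ / ‖B - A‖ ^ 2) • (B - A))
    (hin : ⟪A - P₀, B - P₀⟫ ≤ 0)
    (U : Ω → ℝ) (hU : Measurable U)
    (hUnif : Measure.map U μ = volume.restrict (Set.Icc (0 : ℝ) 1))
    (X : Ω → EuclideanSpace ℝ (Fin 3)) (hX : ∀ ω, X ω = A + U ω • (B - A))
    (dmin : ℝ) (hdmin : dmin = min ‖P - A‖ ‖P - B‖)
    (d : ℝ) (hd1 : ‖P - P₀‖ ≤ d) (hd2 : d ≤ dmin) :
    μ {ω | ‖P - X ω‖ ≤ d} =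
      ENNReal.ofReal (2 * Real.sqrt (d ^ 2 - ‖P - P₀‖ ^ 2) / ‖B - A‖) := by
  have hBA : B - A ≠ 0 := sub_ne_zero.mpr hAB.symm
  have hL : (0:ℝ) < ‖B - A‖ := norm_pos_iff.mpr hBA
  set L : ℝ := ‖B - A‖ with hLdef
  set t : ℝ := ⟪B - A, P - A⟫ / L ^ 2 with ht
  set w : EuclideanSpace ℝ (Fin 3) := (P - A) - t • (B - A) with hw
  have hwP : P - P₀ = w := by rw [hP₀, hw]; abel
  have horth : ⟪B - A, w⟫ = 0 := by
    rw [hw, inner_sub_right, real_inner_smul_right, real_inner_self_eq_norm_sq, ht]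
    field_simp
    rw [← hLdef]; ring
  have key : ∀ c : ℝ, ‖w + c • (B - A)‖ ^ 2 = ‖w‖ ^ 2 + c ^ 2 * L ^ 2 := by
    intro c
    rw [norm_add_sq_real, real_inner_smul_right, real_inner_comm, horth, norm_smul]
    simp [mul_pow, sq_abs]
    exact Or.inl rfl
  have hPA : P - A = w + t • (B - A) := by rw [hw]; abel
  have hPB : P - B = w + (t - 1) • (B - A) := by rw [hw, sub_smul, one_smul]; abel
  have hPX : ∀ ω, P - X ω = w + (t - U ω) • (B - A) := by
    intro ω; rw [hX, hw, sub_smul]; abel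
  -- t ∈ [0,1]
  have h1 : A - P₀ = (-t) • (B - A) := by rw [hP₀, neg_smul]; abel
  have h2 : B - P₀ = (1 - t) • (B - A) := by rw [hP₀, sub_smul, one_smul]; abel
  rw [h1, h2, real_inner_smul_left, real_inner_smul_right,
    real_inner_self_eq_norm_sq] at hin
  have hL2 : (0:ℝ) < ‖B - A‖ ^ 2 := by positivity
  have htt : 0 ≤ t * (1 - t) := by
    have h' : 0 ≤ t * (1 - t) * ‖B - A‖ ^ 2 := by nlinarith [hin]
    exact (mul_nonneg_iff_of_pos_right hL2).mp h'
  have ht0 : 0 ≤ t := by nlinarith [htt]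
  have ht1 : t ≤ 1 := by nlinarith [htt]
  have hwd : ‖w‖ ≤ d := hwP ▸ hd1
  have hd0 : (0:ℝ) ≤ d := le_trans (norm_nonneg w) hwd
  set s : ℝ := Real.sqrt (d ^ 2 - ‖w‖ ^ 2) with hs
  have hdw : 0 ≤ d ^ 2 - ‖w‖ ^ 2 := by nlinarith [norm_nonneg w]
  have hs0 : 0 ≤ s := Real.sqrt_nonneg _
  have hs2 : s ^ 2 = d ^ 2 - ‖w‖ ^ 2 := Real.sq_sqrt hdw
  have hdA : d ≤ ‖P - A‖ := hd2.trans (hdmin ▸ min_le_left _ _)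
  have hdB : d ≤ ‖P - B‖ := hd2.trans (hdmin ▸ min_le_right _ _)
  have hnA : ‖P - A‖ ^ 2 = ‖w‖ ^ 2 + t ^ 2 * L ^ 2 := by rw [hPA, key]
  have hnB : ‖P - B‖ ^ 2 = ‖w‖ ^ 2 + (t - 1) ^ 2 * L ^ 2 := by rw [hPB, key]
  have hdA2 : d ^ 2 ≤ ‖P - A‖ ^ 2 := pow_le_pow_left₀ hd0 hdA 2
  have hdB2 : d ^ 2 ≤ ‖P - B‖ ^ 2 := pow_le_pow_left₀ hd0 hdB 2
  have hstL : s ≤ t * L := by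
    have h1 : s ≤ Real.sqrt ((t * L) ^ 2) := Real.sqrt_le_sqrt (by nlinarith)
    rwa [Real.sqrt_sq (mul_nonneg ht0 hL.le)] at h1
  have hstL' : s ≤ (1 - t) * L := by
    have h1 : s ≤ Real.sqrt (((1 - t) * L) ^ 2) := Real.sqrt_le_sqrt (by nlinarith)
    rwa [Real.sqrt_sq (mul_nonneg (by linarith) hL.le)] at h1
  set r : ℝ := s / L with hr
  have hrL : r * L = s := div_mul_cancel₀ s hL.ne'
  have hr0 : 0 ≤ r := div_nonneg hs0 hL.le
  have hrt : r ≤ t := by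
    rw [hr, div_le_iff₀ hL]; linarith
  have hrt' : t + r ≤ 1 := by
    have : r ≤ 1 - t := by rw [hr, div_le_iff₀ hL]; linarith
    linarith
  have hset : {ω | ‖P - X ω‖ ≤ d} = U ⁻¹' Set.Icc (t - r) (t + r) := by
    ext ω
    simp only [Set.mem_setOf_eq, Set.mem_preimage, Set.mem_Icc]
    rw [hPX ω, ← pow_le_pow_iff_left₀ (norm_nonneg _) hd0 two_ne_zero, key]
    have hiff : ‖w‖ ^ 2 + (t - U ω) ^ 2 * L ^ 2 ≤ d ^ 2 ↔ (t - U ω) ^ 2 ≤ r ^ 2 := by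
      rw [hr, div_pow, le_div_iff₀ (by positivity : (0:ℝ) < L ^ 2), hs2]
      constructor <;> intro h <;> linarith
    rw [hiff]
    constructor
    · intro h
      constructor <;> nlinarith
    · intro ⟨hu1, hu2⟩
      nlinarith
  rw [hset, ← Measure.map_apply hU measurableSet_Icc, hUnif,
    Measure.restrict_apply measurableSet_Icc,
    Set.inter_eq_left.mpr (Set.Icc_subset_Icc (by linarith) (by linarith)),
    Real.volume_Icc]
  have hPw : ‖P - P₀‖ = ‖w‖ := by rw [hwP]
  rw [hPw]
  congr 1
  rw [← hs, hr]
  ring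
end
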